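/- arXiv:1705.07531 — 2 statements merged into one kernel-verified Lean document; each statement's English description precedes it below -/
import Mathlib

section
/- The Gaussian complexity of C₁(x*,v*) ∩ S^{n+m-1} satisfies γ(C₁ ∩ S^{n+m-1}) ≤ γ(T_f(x*) ∩ S^{n-1}) + γ(T_g(v*) ∩ S^{m-1}), where T_f, T_g are tangent cones of f at x* and g at v*. -/
open MeasureTheory
open scoped RealInnerProductSpace

/-- The standard Gaussian measure on `ℝ^k` (Euclidean space). -/
noncomputable def stdGaussian (k : ℕ) : Measure (EuclideanSpace ℝ (Fin k)) :=
  (Measure.pi fun _ : Fin k => ProbabilityTheory.gaussianReal 0 1).map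
    (⇑(EuclideanSpace.equiv (Fin k) ℝ).symm)

/-- Gaussian complexity of `C ⊆ ℝ^k`. -/
noncomputable def gaussianComplexity {k : ℕ} (C : Set (EuclideanSpace ℝ (Fin k))) : ℝ :=
  ∫ g, (⨆ v : C, |⟪g, (v : EuclideanSpace ℝ (Fin k))⟫|) ∂(stdGaussian k)

/-- Gaussian complexity of a subset of `ℝ^n × ℝ^m`. -/
noncomputable def gaussianComplexity₂ {n m : ℕ}
    (C : Set (EuclideanSpace ℝ (Fin n) × EuclideanSpace ℝ (Fin m))) : ℝ :=
  ∫ p, (⨆ q : C,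
      |⟪p.1, (q : EuclideanSpace ℝ (Fin n) × EuclideanSpace ℝ (Fin m)).1⟫ +
        ⟪p.2, (q : EuclideanSpace ℝ (Fin n) × EuclideanSpace ℝ (Fin m)).2⟫|)
    ∂((stdGaussian n).prod (stdGaussian m))

/-- Tangent cone of `f` at `x`: the set of descent directions. -/
def tangentCone' {k : ℕ} (f : EuclideanSpace ℝ (Fin k) → ℝ) (x : EuclideanSpace ℝ (Fin k)) :
    Set (EuclideanSpace ℝ (Fin k)) :=
  {u | ∃ t : ℝ, 0 < t ∧ f (x + t • u) ≤ f x}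

section Aux

open ProbabilityTheory Real

/-- Auxiliary: the supremum of `|⟪x, v⟫|` over `v ∈ C`. -/
noncomputable def supAbs {k : ℕ} (C : Set (EuclideanSpace ℝ (Fin k)))
    (x : EuclideanSpace ℝ (Fin k)) : ℝ :=
  ⨆ v : C, |⟪x, (v : EuclideanSpace ℝ (Fin k))⟫|

variable {k : ℕ} {C : Set (EuclideanSpace ℝ (Fin k))} {x y : EuclideanSpace ℝ (Fin k)}

lemma supAbs_nonneg : 0 ≤ supAbs C x :=
  Real.iSup_nonneg fun _ => abs_nonneg _

lemma supAbs_bdd (hC : ∀ v ∈ C, ‖v‖ ≤ 1) :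
    BddAbove (Set.range fun v : C => |⟪x, (v : EuclideanSpace ℝ (Fin k))⟫|) := by
  refine ⟨‖x‖, ?_⟩
  rintro _ ⟨v, rfl⟩
  calc |⟪x, (v : EuclideanSpace ℝ (Fin k))⟫| ≤ ‖x‖ * ‖(v : EuclideanSpace ℝ (Fin k))‖ :=
        abs_real_inner_le_norm _ _
    _ ≤ ‖x‖ * 1 := by
        have := hC v v.2
        nlinarith [norm_nonneg x]
    _ = ‖x‖ := mul_one _

lemma le_supAbs (hC : ∀ v ∈ C, ‖v‖ ≤ 1) {v : EuclideanSpace ℝ (Fin k)} (hv : v ∈ C) :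
    |⟪x, v⟫| ≤ supAbs C x :=
  le_ciSup (supAbs_bdd hC) (⟨v, hv⟩ : C)

lemma supAbs_le {a : ℝ} (h : ∀ v ∈ C, |⟪x, v⟫| ≤ a) (ha : 0 ≤ a) : supAbs C x ≤ a :=
  Real.iSup_le (fun v => h v v.2) ha

lemma supAbs_le_norm (hC : ∀ v ∈ C, ‖v‖ ≤ 1) : supAbs C x ≤ ‖x‖ := by
  refine supAbs_le (fun v hv => ?_) (norm_nonneg x)
  calc |⟪x, v⟫| ≤ ‖x‖ * ‖v‖ := abs_real_inner_le_norm _ _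
    _ ≤ ‖x‖ * 1 := by have := hC v hv; nlinarith [norm_nonneg x]
    _ = ‖x‖ := mul_one _

lemma supAbs_lipschitz (hC : ∀ v ∈ C, ‖v‖ ≤ 1) : LipschitzWith 1 (supAbs C) := by
  refine LipschitzWith.of_dist_le_mul fun x y => ?_
  rw [NNReal.coe_one, one_mul, Real.dist_eq, abs_sub_le_iff]
  have key : ∀ a b : EuclideanSpace ℝ (Fin k), supAbs C a - supAbs C b ≤ dist a b := by
    intro a b
    rw [sub_le_iff_le_add]
    refine supAbs_le (fun v hv => ?_) (add_nonneg dist_nonneg supAbs_nonneg)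
    have h1 : |⟪a, v⟫| ≤ |⟪b, v⟫| + |⟪a - b, v⟫| := by
      have : ⟪a, v⟫ = ⟪b, v⟫ + ⟪a - b, v⟫ := by rw [← inner_add_left, add_sub_cancel]
      rw [this]; exact abs_add_le _ _
    have h2 : |⟪a - b, v⟫| ≤ ‖a - b‖ := by
      calc |⟪a - b, v⟫| ≤ ‖a - b‖ * ‖v‖ := abs_real_inner_le_norm _ _
        _ ≤ ‖a - b‖ * 1 := by have := hC v hv; nlinarith [norm_nonneg (a - b)]
        _ = ‖a - b‖ := mul_one _
    calc |⟪a, v⟫| ≤ |⟪b, v⟫| + ‖a - b‖ := by linarith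
      _ ≤ supAbs C b + dist a b := by
          rw [dist_eq_norm]; exact add_le_add (le_supAbs hC hv) le_rfl
      _ = dist a b + supAbs C b := add_comm _ _
  exact ⟨key x y, by rw [dist_comm x y] at *; exact key y x⟩

lemma tangentCone'_smul_mem {f : EuclideanSpace ℝ (Fin k) → ℝ} {xs u : EuclideanSpace ℝ (Fin k)}
    {c : ℝ} (hc : 0 < c) (hu : u ∈ tangentCone' f xs) :
    c • u ∈ tangentCone' f xs := by
  obtain ⟨t, ht, hle⟩ := hu
  exact ⟨t / c, div_pos ht hc, by
    rwa [smul_smul, div_mul_cancel₀ _ (ne_of_gt hc)]⟩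

lemma aemeas_equiv (k : ℕ) :
    AEMeasurable (⇑(EuclideanSpace.equiv (Fin k) ℝ).symm)
      (Measure.pi fun _ : Fin k => gaussianReal 0 1) :=
  ((EuclideanSpace.equiv (Fin k) ℝ).symm.continuous.measurable).aemeasurable

instance stdGaussian_prob (k : ℕ) : IsProbabilityMeasure (stdGaussian k) :=
  Measure.isProbabilityMeasure_map (aemeas_equiv k)

lemma pi_map_eval {k : ℕ} (i : Fin k) :
    (Measure.pi fun _ : Fin k => gaussianReal 0 1).map (Function.eval i) = gaussianReal 0 1 := by
  ext s hs
  rw [Measure.map_apply (measurable_pi_apply i) hs, Set.eval_preimage, Measure.pi_pi]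
  rw [Fintype.prod_eq_single i]
  · simp
  · intro j hj; simp [Function.update_of_ne hj]

lemma integrable_abs_gaussianReal : Integrable (fun x : ℝ => |x|) (gaussianReal 0 1) := by
  have h1 : gaussianReal 0 1 = volume.withDensity (gaussianPDF 0 1) := by
    rw [gaussianReal]; simp
  rw [h1, integrable_withDensity_iff (measurable_gaussianPDF 0 1)
    (Filter.Eventually.of_forall fun x => ENNReal.ofReal_lt_top)]
  have h2 : Integrable (fun x : ℝ => (√(2 * π))⁻¹ * |x * rexp (-(2⁻¹) * x ^ 2)|) volume :=
    ((integrable_mul_exp_neg_mul_sq (by norm_num : (0:ℝ) < 2⁻¹)).abs).const_mul _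
  refine h2.congr (Filter.Eventually.of_forall fun x => ?_)
  simp only [gaussianPDF_def]; rw [ENNReal.toReal_ofReal (gaussianPDFReal_nonneg 0 1 x)]
  rw [gaussianPDFReal]
  rw [abs_mul, abs_of_pos (Real.exp_pos _)]
  push_cast
  ring_nf

lemma integrable_norm_stdGaussian (k : ℕ) :
    Integrable (fun x => ‖x‖) (stdGaussian k) := by
  rw [_root_.stdGaussian, integrable_map_measure continuous_norm.aestronglyMeasurable (aemeas_equiv k)]
  have hdom : Integrable (fun y : Fin k → ℝ => ∑ i, |y i|)
      (Measure.pi fun _ : Fin k => gaussianReal 0 1) := by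
    apply integrable_finset_sum
    intro i _
    have := (integrable_map_measure continuous_abs.aestronglyMeasurable
      (measurable_pi_apply i).aemeasurable).mp
      (by rw [pi_map_eval i]; exact integrable_abs_gaussianReal)
    exact this
  refine hdom.mono' ?_ (Filter.Eventually.of_forall fun y => ?_)
  · exact (continuous_norm.comp
      (EuclideanSpace.equiv (Fin k) ℝ).symm.continuous).aestronglyMeasurable
  · simp only [Function.comp, norm_norm]
    rw [EuclideanSpace.norm_eq]
    have h1 : ∑ i, ‖((EuclideanSpace.equiv (Fin k) ℝ).symm y) i‖ ^ 2 ≤ (∑ i, |y i|) ^ 2 := by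
      calc ∑ i, ‖((EuclideanSpace.equiv (Fin k) ℝ).symm y) i‖ ^ 2 = ∑ i, |y i| ^ 2 := by
            simp [Real.norm_eq_abs]
        _ ≤ (∑ i, |y i|) ^ 2 := Finset.sum_sq_le_sq_sum_of_nonneg fun i _ => abs_nonneg _
    calc √(∑ i, ‖((EuclideanSpace.equiv (Fin k) ℝ).symm y) i‖ ^ 2)
        ≤ √((∑ i, |y i|) ^ 2) := Real.sqrt_le_sqrt h1
      _ = ∑ i, |y i| := Real.sqrt_sq (Finset.sum_nonneg fun i _ => abs_nonneg _)

lemma integrable_supAbs (hC : ∀ v ∈ C, ‖v‖ ≤ 1) :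
    Integrable (supAbs C) (stdGaussian k) := by
  refine (integrable_norm_stdGaussian k).mono'
    (supAbs_lipschitz hC).continuous.aestronglyMeasurable
    (Filter.Eventually.of_forall fun x => ?_)
  rw [Real.norm_eq_abs, abs_of_nonneg supAbs_nonneg]
  exact supAbs_le_norm hC

end Aux

/-- `γ(C₁ ∩ S^{n+m-1}) ≤ γ(T_f(x*) ∩ S^{n-1}) + γ(T_g(v*) ∩ S^{m-1})`. -/
theorem gaussianComplexity_cone_one_bound {n m : ℕ}
    (f : EuclideanSpace ℝ (Fin n) → ℝ) (g : EuclideanSpace ℝ (Fin m) → ℝ)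
    -- f and g are norms:
    (hf_add : ∀ x y, f (x + y) ≤ f x + f y)
    (hf_smul : ∀ (c : ℝ) x, f (c • x) = |c| * f x)
    (hf_pos : ∀ x, x ≠ 0 → 0 < f x)
    (hg_add : ∀ x y, g (x + y) ≤ g x + g y)
    (hg_smul : ∀ (c : ℝ) x, g (c • x) = |c| * g x)
    (hg_pos : ∀ x, x ≠ 0 → 0 < g x)
    (xs : EuclideanSpace ℝ (Fin n)) (vs : EuclideanSpace ℝ (Fin m))
    (hfne : (tangentCone' f xs ∩ Metric.sphere 0 1).Nonempty)
    (hgne : (tangentCone' g vs ∩ Metric.sphere 0 1).Nonempty) :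
    gaussianComplexity₂
        ({p : EuclideanSpace ℝ (Fin n) × EuclideanSpace ℝ (Fin m) |
            p.1 ∈ tangentCone' f xs ∧ p.2 ∈ tangentCone' g vs} ∩
          {p | ‖p.1‖ ^ 2 + ‖p.2‖ ^ 2 = 1}) ≤
      gaussianComplexity (tangentCone' f xs ∩ Metric.sphere 0 1) +
        gaussianComplexity (tangentCone' g vs ∩ Metric.sphere 0 1) := by
  set A := tangentCone' f xs ∩ Metric.sphere 0 1 with hA
  set B := tangentCone' g vs ∩ Metric.sphere 0 1 with hB
  set D := ({p : EuclideanSpace ℝ (Fin n) × EuclideanSpace ℝ (Fin m) |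
            p.1 ∈ tangentCone' f xs ∧ p.2 ∈ tangentCone' g vs} ∩
          {p | ‖p.1‖ ^ 2 + ‖p.2‖ ^ 2 = 1}) with hD
  have hA1 : ∀ v ∈ A, ‖v‖ ≤ 1 := fun v hv =>
    le_of_eq (mem_sphere_zero_iff_norm.mp hv.2)
  have hB1 : ∀ v ∈ B, ‖v‖ ≤ 1 := fun v hv =>
    le_of_eq (mem_sphere_zero_iff_norm.mp hv.2)
  -- key pointwise bounds
  have keyF : ∀ (x : EuclideanSpace ℝ (Fin n)) (a : EuclideanSpace ℝ (Fin n)),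
      a ∈ tangentCone' f xs → ‖a‖ ≤ 1 → |⟪x, a⟫| ≤ supAbs A x := by
    intro x a hmem hle
    by_cases ha : a = 0
    · rw [ha, inner_zero_right, abs_zero]; exact supAbs_nonneg
    · have hn : 0 < ‖a‖ := norm_pos_iff.mpr ha
      set u : EuclideanSpace ℝ (Fin n) := ‖a‖⁻¹ • a with hu_def
      have hu : u ∈ A := by
        refine ⟨tangentCone'_smul_mem (inv_pos.mpr hn) hmem, ?_⟩
        rw [mem_sphere_zero_iff_norm, hu_def, norm_smul, norm_inv, norm_norm,
          inv_mul_cancel₀ hn.ne']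
      have h3 : |⟪x, u⟫| = ‖a‖⁻¹ * |⟪x, a⟫| := by
        rw [hu_def, real_inner_smul_right, abs_mul, abs_inv, abs_norm]
      have h4 : |⟪x, a⟫| = ‖a‖ * |⟪x, u⟫| := by
        rw [h3]; field_simp
      rw [h4]
      calc ‖a‖ * |⟪x, u⟫| ≤ ‖a‖ * supAbs A x :=
            mul_le_mul_of_nonneg_left (le_supAbs hA1 hu) hn.le
        _ ≤ 1 * supAbs A x := mul_le_mul_of_nonneg_right hle supAbs_nonneg
        _ = supAbs A x := one_mul _
  have keyG : ∀ (y : EuclideanSpace ℝ (Fin m)) (b : EuclideanSpace ℝ (Fin m)),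
      b ∈ tangentCone' g vs → ‖b‖ ≤ 1 → |⟪y, b⟫| ≤ supAbs B y := by
    intro y b hmem hle
    by_cases hb : b = 0
    · rw [hb, inner_zero_right, abs_zero]; exact supAbs_nonneg
    · have hn : 0 < ‖b‖ := norm_pos_iff.mpr hb
      set u : EuclideanSpace ℝ (Fin m) := ‖b‖⁻¹ • b with hu_def
      have hu : u ∈ B := by
        refine ⟨tangentCone'_smul_mem (inv_pos.mpr hn) hmem, ?_⟩
        rw [mem_sphere_zero_iff_norm, hu_def, norm_smul, norm_inv, norm_norm,
          inv_mul_cancel₀ hn.ne']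
      have h3 : |⟪y, u⟫| = ‖b‖⁻¹ * |⟪y, b⟫| := by
        rw [hu_def, real_inner_smul_right, abs_mul, abs_inv, abs_norm]
      have h4 : |⟪y, b⟫| = ‖b‖ * |⟪y, u⟫| := by
        rw [h3]; field_simp
      rw [h4]
      calc ‖b‖ * |⟪y, u⟫| ≤ ‖b‖ * supAbs B y :=
            mul_le_mul_of_nonneg_left (le_supAbs hB1 hu) hn.le
        _ ≤ 1 * supAbs B y := mul_le_mul_of_nonneg_right hle supAbs_nonneg
        _ = supAbs B y := one_mul _
  have hpt : ∀ p : EuclideanSpace ℝ (Fin n) × EuclideanSpace ℝ (Fin m),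
      (⨆ q : D, |⟪p.1, (q : EuclideanSpace ℝ (Fin n) × EuclideanSpace ℝ (Fin m)).1⟫ +
        ⟪p.2, (q : EuclideanSpace ℝ (Fin n) × EuclideanSpace ℝ (Fin m)).2⟫|) ≤
      supAbs A p.1 + supAbs B p.2 := by
    intro p
    refine Real.iSup_le ?_ (add_nonneg supAbs_nonneg supAbs_nonneg)
    rintro ⟨⟨a, b⟩, ⟨⟨ha, hb⟩, hnorm⟩⟩
    simp only [Set.mem_setOf_eq] at hnorm
    have han : ‖a‖ ≤ 1 := by nlinarith [norm_nonneg a, norm_nonneg b, sq_nonneg ‖b‖]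
    have hbn : ‖b‖ ≤ 1 := by nlinarith [norm_nonneg a, norm_nonneg b, sq_nonneg ‖a‖]
    calc |⟪p.1, a⟫ + ⟪p.2, b⟫| ≤ |⟪p.1, a⟫| + |⟪p.2, b⟫| := abs_add_le _ _
      _ ≤ supAbs A p.1 + supAbs B p.2 := add_le_add (keyF p.1 a ha han) (keyG p.2 b hb hbn)
  -- integrability
  have hFint : Integrable (supAbs A) (stdGaussian n) := integrable_supAbs hA1
  have hGint : Integrable (supAbs B) (stdGaussian m) := integrable_supAbs hB1
  have hmapf : Measure.map Prod.fst ((stdGaussian n).prod (stdGaussian m)) = stdGaussian n := by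
    rw [Measure.map_fst_prod, measure_univ, one_smul]
  have hmaps : Measure.map Prod.snd ((stdGaussian n).prod (stdGaussian m)) = stdGaussian m := by
    rw [Measure.map_snd_prod, measure_univ, one_smul]
  have hFmeas : AEStronglyMeasurable (supAbs A)
      (Measure.map Prod.fst ((stdGaussian n).prod (stdGaussian m))) := by
    rw [hmapf]; exact (supAbs_lipschitz hA1).continuous.aestronglyMeasurable
  have hGmeas : AEStronglyMeasurable (supAbs B)
      (Measure.map Prod.snd ((stdGaussian n).prod (stdGaussian m))) := by
    rw [hmaps]; exact (supAbs_lipschitz hB1).continuous.aestronglyMeasurable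
  have hF1 : Integrable (fun p : EuclideanSpace ℝ (Fin n) × EuclideanSpace ℝ (Fin m) =>
      supAbs A p.1) ((stdGaussian n).prod (stdGaussian m)) :=
    (integrable_map_measure hFmeas measurable_fst.aemeasurable).mp (by rw [hmapf]; exact hFint)
  have hG1 : Integrable (fun p : EuclideanSpace ℝ (Fin n) × EuclideanSpace ℝ (Fin m) =>
      supAbs B p.2) ((stdGaussian n).prod (stdGaussian m)) :=
    (integrable_map_measure hGmeas measurable_snd.aemeasurable).mp (by rw [hmaps]; exact hGint)
  have hint1 : ∫ p, supAbs A p.1 ∂((stdGaussian n).prod (stdGaussian m)) =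
      ∫ x, supAbs A x ∂(stdGaussian n) := by
    have := integral_map measurable_fst.aemeasurable hFmeas
    rw [hmapf] at this
    exact this.symm
  have hint2 : ∫ p, supAbs B p.2 ∂((stdGaussian n).prod (stdGaussian m)) =
      ∫ y, supAbs B y ∂(stdGaussian m) := by
    have := integral_map measurable_snd.aemeasurable hGmeas
    rw [hmaps] at this
    exact this.symm
  have hle : gaussianComplexity₂ D ≤
      ∫ p, (supAbs A p.1 + supAbs B p.2) ∂((stdGaussian n).prod (stdGaussian m)) := by
    refine integral_mono_of_nonneg
      (Filter.Eventually.of_forall fun p => Real.iSup_nonneg fun q => abs_nonneg _)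
      (hF1.add hG1) (Filter.Eventually.of_forall fun p => hpt p)
  calc gaussianComplexity₂ D ≤
      ∫ p, (supAbs A p.1 + supAbs B p.2) ∂((stdGaussian n).prod (stdGaussian m)) := hle
    _ = ∫ x, supAbs A x ∂(stdGaussian n) + ∫ y, supAbs B y ∂(stdGaussian m) := by
        rw [integral_add hF1 hG1, hint1, hint2]
    _ = gaussianComplexity A + gaussianComplexity B := rfl
end

section
/- Suppose τ₁ ≥ β·f*(Φᵀz) and τ₂ ≥ β·g*(z) for some β > 1, and (x̂,v̂) satisfies the optimality inequality (1/2)‖Φ(x̂−x*)+(v̂−v*)‖₂² ≤ τ₁[f(x*)−f(x̂)] + τ₂[g(v*)−g(v̂)] + ⟨Φ(x̂−x*),z⟩ + ⟨v̂−v*,z⟩. Then τ₁f(x̂) + τ₂g(v̂) ≤ τ₁f(x*) + τ₂g(v*) + (τ₁/β)f(x̂−x*) + (τ₂/β)g(v̂−v*). -/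
open Finset

/-- Dual norm: `f*(w) = sup {⟨w,u⟩ : f(u) ≤ 1}` (Euclidean dot product). -/
noncomputable def dualNorm {n : ℕ} (f : (Fin n → ℝ) → ℝ) (w : Fin n → ℝ) : ℝ :=
  sSup {y | ∃ u : Fin n → ℝ, f u ≤ 1 ∧ y = ∑ i, w i * u i}

section helpers
variable {n : ℕ} {f : (Fin n → ℝ) → ℝ}


lemma norm_f_zero (hf_smul : ∀ (c : ℝ) x, f (c • x) = |c| * f x) : f 0 = 0 := by
  have := hf_smul 0 0; simpa using this

lemma norm_f_nonneg (hf_smul : ∀ (c : ℝ) x, f (c • x) = |c| * f x)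
    (hf_pos : ∀ x, x ≠ 0 → 0 < f x) (x : Fin n → ℝ) : 0 ≤ f x := by
  by_cases hx : x = 0
  · simp [hx, norm_f_zero hf_smul]
  · exact (hf_pos x hx).le

lemma norm_f_upper (hf_add : ∀ x y, f (x + y) ≤ f x + f y)
    (hf_smul : ∀ (c : ℝ) x, f (c • x) = |c| * f x)
    (hf_pos : ∀ x, x ≠ 0 → 0 < f x) :
    ∃ C : ℝ, 0 ≤ C ∧ ∀ x, f x ≤ C * ‖x‖ := by
  classical
  set e : Fin n → (Fin n → ℝ) := fun i => Pi.single i (1:ℝ) with he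
  refine ⟨∑ i, f (e i), Finset.sum_nonneg fun i _ => norm_f_nonneg hf_smul hf_pos _, ?_⟩
  intro x
  have hx : x = ∑ i, x i • e i := by
    funext j; simp [he, Pi.single_apply]
  calc f x = f (∑ i, x i • e i) := by rw [← hx]
    _ ≤ ∑ i, f (x i • e i) :=
        Finset.le_sum_of_subadditive f (norm_f_zero hf_smul).le hf_add _ _
    _ = ∑ i, |x i| * f (e i) := by simp [hf_smul]
    _ ≤ ∑ i, ‖x‖ * f (e i) := by
        refine Finset.sum_le_sum fun i _ => ?_
        exact mul_le_mul_of_nonneg_right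
          (by simpa [Real.norm_eq_abs] using norm_le_pi_norm x i)
          (norm_f_nonneg hf_smul hf_pos _)
    _ = (∑ i, f (e i)) * ‖x‖ := by rw [← Finset.mul_sum, mul_comm]

lemma norm_f_continuous (hf_add : ∀ x y, f (x + y) ≤ f x + f y)
    (hf_smul : ∀ (c : ℝ) x, f (c • x) = |c| * f x)
    (hf_pos : ∀ x, x ≠ 0 → 0 < f x) : Continuous f := by
  obtain ⟨C, hC0, hC⟩ := norm_f_upper hf_add hf_smul hf_pos
  have hlip : LipschitzWith C.toNNReal f := by
    refine LipschitzWith.of_dist_le_mul fun x y => ?_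
    have hfd : ∀ a b : Fin n → ℝ, f a - f b ≤ f (a - b) := by
      intro a b
      have := hf_add (a - b) b
      simpa [sub_add_cancel] using this
    have hneg : f (y - x) = f (x - y) := by
      have := hf_smul (-1) (x - y)
      simpa [neg_sub] using this
    have habs : |f x - f y| ≤ f (x - y) := by
      rw [abs_sub_le_iff]
      exact ⟨hfd x y, by rw [← hneg]; exact hfd y x⟩
    calc dist (f x) (f y) = |f x - f y| := Real.dist_eq _ _
      _ ≤ f (x - y) := habs
      _ ≤ C * ‖x - y‖ := hC _
      _ = C.toNNReal * dist x y := by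
          rw [dist_eq_norm, Real.coe_toNNReal C hC0]
  exact hlip.continuous

lemma norm_f_lower (hf_add : ∀ x y, f (x + y) ≤ f x + f y)
    (hf_smul : ∀ (c : ℝ) x, f (c • x) = |c| * f x)
    (hf_pos : ∀ x, x ≠ 0 → 0 < f x) :
    ∃ c : ℝ, 0 < c ∧ ∀ u, c * ‖u‖ ≤ f u := by
  classical
  by_cases hsph : (Metric.sphere (0 : Fin n → ℝ) 1).Nonempty
  · obtain ⟨u₀, hu₀, hmin⟩ := (isCompact_sphere (0 : Fin n → ℝ) 1).exists_isMinOn hsph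
      (norm_f_continuous hf_add hf_smul hf_pos).continuousOn
    have hu₀n : ‖u₀‖ = 1 := by simpa using hu₀
    have hu₀0 : u₀ ≠ 0 := by intro h; rw [h] at hu₀n; simp at hu₀n
    refine ⟨f u₀, hf_pos _ hu₀0, fun u => ?_⟩
    by_cases hu : u = 0
    · simp [hu, norm_f_zero hf_smul]
    · have hn : ‖u‖ ≠ 0 := norm_ne_zero_iff.mpr hu
      have hmem : ‖u‖⁻¹ • u ∈ Metric.sphere (0 : Fin n → ℝ) 1 := by
        simp [norm_smul, abs_inv, abs_of_nonneg (norm_nonneg u), inv_mul_cancel₀ hn]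
      have h1 : f u₀ ≤ f (‖u‖⁻¹ • u) := hmin hmem
      have h2 : f (‖u‖⁻¹ • u) = ‖u‖⁻¹ * f u := by
        rw [hf_smul]; congr 1
        rw [abs_inv, abs_of_nonneg (norm_nonneg u)]
      rw [h2] at h1
      have := mul_le_mul_of_nonneg_left h1 (norm_nonneg u)
      calc f u₀ * ‖u‖ = ‖u‖ * f u₀ := mul_comm _ _
        _ ≤ ‖u‖ * (‖u‖⁻¹ * f u) := this
        _ = f u := by field_simp
  · refine ⟨1, one_pos, fun u => ?_⟩
    have hu : u = 0 := by
      by_contra h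
      exact hsph ⟨‖u‖⁻¹ • u, by
        simp [norm_smul, abs_inv, abs_of_nonneg (norm_nonneg u),
          inv_mul_cancel₀ (norm_ne_zero_iff.mpr h)]⟩
    simp [hu, norm_f_zero hf_smul]


lemma dual_holder (hf_add : ∀ x y, f (x + y) ≤ f x + f y)
    (hf_smul : ∀ (c : ℝ) x, f (c • x) = |c| * f x)
    (hf_pos : ∀ x, x ≠ 0 → 0 < f x) (w u : Fin n → ℝ) :
    ∑ i, w i * u i ≤ dualNorm f w * f u := by
  classical
  obtain ⟨c, hc, hcf⟩ := norm_f_lower hf_add hf_smul hf_pos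
  have hbdd : BddAbove {y | ∃ u : Fin n → ℝ, f u ≤ 1 ∧ y = ∑ i, w i * u i} := by
    refine ⟨(∑ i, |w i|) * c⁻¹, fun y hy => ?_⟩
    obtain ⟨v, hv1, rfl⟩ := hy
    have hvn : ‖v‖ ≤ c⁻¹ := by
      rw [show c⁻¹ = 1 / c by ring, le_div_iff₀ hc]
      linarith [hcf v, hv1]
    calc ∑ i, w i * v i ≤ ∑ i, |w i| * c⁻¹ := by
          refine Finset.sum_le_sum fun i _ => ?_
          calc w i * v i ≤ |w i * v i| := le_abs_self _
            _ = |w i| * |v i| := abs_mul _ _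
            _ ≤ |w i| * c⁻¹ := by
                refine mul_le_mul_of_nonneg_left ?_ (abs_nonneg _)
                exact le_trans (by simpa [Real.norm_eq_abs] using norm_le_pi_norm v i) hvn
      _ = (∑ i, |w i|) * c⁻¹ := by rw [← Finset.sum_mul]
  by_cases hu : u = 0
  · simp [hu, norm_f_zero hf_smul]
  · have hfu : 0 < f u := hf_pos u hu
    have hmem : ∑ i, w i * ((f u)⁻¹ • u) i ∈
        {y | ∃ v : Fin n → ℝ, f v ≤ 1 ∧ y = ∑ i, w i * v i} := by
      refine ⟨(f u)⁻¹ • u, ?_, rfl⟩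
      rw [hf_smul, abs_inv, abs_of_pos hfu, inv_mul_cancel₀ hfu.ne']
    have hle : ∑ i, w i * ((f u)⁻¹ • u) i ≤ dualNorm f w := le_csSup hbdd hmem
    have key : ∑ i, w i * u i = f u * ∑ i, w i * ((f u)⁻¹ • u) i := by
      rw [Finset.mul_sum]
      refine Finset.sum_congr rfl fun i _ => ?_
      simp [Pi.smul_apply, smul_eq_mul]
      field_simp
    rw [key, mul_comm (dualNorm f w) (f u)]
    exact mul_le_mul_of_nonneg_left hle hfu.le

end helpers

/-- under the regularization-parameter assumption, the penalized
objective values satisfy the stated inequality. -/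
theorem penalized_norm_inequality {n m : ℕ}
    (Φ : Matrix (Fin m) (Fin n) ℝ) (z : Fin m → ℝ)
    (f : (Fin n → ℝ) → ℝ) (g : (Fin m → ℝ) → ℝ)
    -- f and g are norms:
    (hf_add : ∀ x y, f (x + y) ≤ f x + f y)
    (hf_smul : ∀ (c : ℝ) x, f (c • x) = |c| * f x)
    (hf_pos : ∀ x, x ≠ 0 → 0 < f x)
    (hg_add : ∀ x y, g (x + y) ≤ g x + g y)
    (hg_smul : ∀ (c : ℝ) x, g (c • x) = |c| * g x)
    (hg_pos : ∀ x, x ≠ 0 → 0 < g x)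
    (τ₁ τ₂ β : ℝ) (hτ₁ : 0 < τ₁) (hτ₂ : 0 < τ₂) (hβ : 1 < β)
    (hτ₁' : τ₁ ≥ β * dualNorm f (Φ.transpose.mulVec z))
    (hτ₂' : τ₂ ≥ β * dualNorm g z)
    (xh xs : Fin n → ℝ) (vh vs : Fin m → ℝ)
    (hopt : (1/2) * (∑ i, (Φ.mulVec (xh - xs) + (vh - vs)) i ^ 2) ≤
      τ₁ * (f xs - f xh) + τ₂ * (g vs - g vh) +
      (∑ i, Φ.mulVec (xh - xs) i * z i) + (∑ i, (vh - vs) i * z i)) :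
    τ₁ * f xh + τ₂ * g vh ≤
      τ₁ * f xs + τ₂ * g vs + (τ₁ / β) * f (xh - xs) + (τ₂ / β) * g (vh - vs) := by
  have hβ0 : (0:ℝ) < β := lt_trans one_pos hβ
  have h0 : (0:ℝ) ≤ ∑ i, (Φ.mulVec (xh - xs) + (vh - vs)) i ^ 2 :=
    Finset.sum_nonneg fun i _ => sq_nonneg _
  -- transpose identity
  have htrans : ∑ i, Φ.mulVec (xh - xs) i * z i
      = ∑ j, Φ.transpose.mulVec z j * (xh - xs) j := by
    simp only [Matrix.mulVec, dotProduct, Matrix.transpose_apply,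
      Finset.sum_mul, Finset.mul_sum]
    rw [Finset.sum_comm]
    refine Finset.sum_congr rfl fun j _ => Finset.sum_congr rfl fun i _ => by ring
  have hA : ∑ i, Φ.mulVec (xh - xs) i * z i ≤ (τ₁ / β) * f (xh - xs) := by
    rw [htrans]
    refine le_trans (dual_holder hf_add hf_smul hf_pos _ _) ?_
    refine mul_le_mul_of_nonneg_right ?_ (norm_f_nonneg hf_smul hf_pos _)
    rw [le_div_iff₀ hβ0] at *
    linarith [hτ₁']
  have hB : ∑ i, (vh - vs) i * z i ≤ (τ₂ / β) * g (vh - vs) := by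
    have : ∑ i, (vh - vs) i * z i = ∑ i, z i * (vh - vs) i := by
      exact Finset.sum_congr rfl fun i _ => mul_comm _ _
    rw [this]
    refine le_trans (dual_holder hg_add hg_smul hg_pos _ _) ?_
    refine mul_le_mul_of_nonneg_right ?_ (norm_f_nonneg hg_smul hg_pos _)
    rw [le_div_iff₀ hβ0] at *
    linarith [hτ₂']
  linarith [hopt, h0, hA, hB]
end
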